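/- Let 0 < α ≤ 1, q ≥ 2 with conjugate exponent q' = q/(q−1), C_μ > 0, let μ be an α-dimensional Borel measure on ℝ with constant C_μ, and let ρ satisfy 0 < qρ/2 < α. Then there exists a constant C (depending only on α, q, ρ, C_μ) such that for all measurable functions g, h : ℝ × ℝ → ℂ, |∫∫∫∫ g(x,t) h(x',t') |x − x'|^{−ρ} dμ(x) dt dμ(x') dt'| ≤ C N(g) N(h), where all four variables x, t, x', t' range over (0,1) and N(g) = (∫_{(0,1)} (∫_0^1 |g(x,t)| dt)^{q'} dμ(x))^{1/q'}. -/

import Mathlib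

open MeasureTheory Filter Set
open scoped ENNReal NNReal


private lemma annuli_exists {d : ℝ} (hd0 : 0 < d) (hd1 : d < 1) :
    ∃ j : ℕ, (2:ℝ) ^ (-(j:ℝ) - 1) ≤ d ∧ d < (2:ℝ) ^ (-(j:ℝ)) := by
  have key : ∀ n : ℕ, (2:ℝ) ^ (-(n:ℝ)) = (1/2:ℝ) ^ n := by
    intro n
    rw [Real.rpow_neg (by norm_num : (0:ℝ) ≤ 2), Real.rpow_natCast]
    simp [one_div, inv_pow]
  have hex : ∃ n : ℕ, (2:ℝ) ^ (-(n:ℝ) - 1) ≤ d := by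
    obtain ⟨n, hn⟩ := exists_pow_lt_of_lt_one hd0 (by norm_num : (1/2:ℝ) < 1)
    refine ⟨n, ?_⟩
    calc (2:ℝ) ^ (-(n:ℝ) - 1) ≤ 2 ^ (-(n:ℝ)) :=
          Real.rpow_le_rpow_of_exponent_le (by norm_num) (by linarith)
      _ = (1/2:ℝ) ^ n := key n
      _ ≤ d := hn.le
  refine ⟨Nat.find hex, Nat.find_spec hex, ?_⟩
  rcases Nat.eq_zero_or_pos (Nat.find hex) with h0 | hpos
  · rw [h0]
    simpa using hd1
  · have hmin := Nat.find_min hex (Nat.sub_lt hpos one_pos)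
    push_neg at hmin
    have hcast : (↑(Nat.find hex - 1) : ℝ) = (Nat.find hex : ℝ) - 1 := by
      push_cast [Nat.cast_sub hpos]
      ring
    rw [hcast] at hmin
    convert hmin using 2
    · rfl
    · ring

private lemma kernel_bound {α Cμ : ℝ} (hCμ : 0 < Cμ) (μ : Measure ℝ)
    (hμ : ∀ x : ℝ, ∀ r : ℝ, 0 < r → μ (Metric.ball x r) ≤ ENNReal.ofReal (Cμ * r ^ α))
    {β : ℝ} (hβ : 0 < β) (hβα : β < α) {x : ℝ} (hx : x ∈ Set.Ioo (0:ℝ) 1) :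
    ∫⁻ y in Set.Ioo (0:ℝ) 1, ENNReal.ofReal (|x - y| ^ (-β)) ∂μ ≤
      ENNReal.ofReal (Cμ * 2 ^ β) * (1 - ENNReal.ofReal ((2:ℝ) ^ (β - α)))⁻¹ := by
  set f : ℝ → ℝ≥0∞ := fun y => ENNReal.ofReal (|x - y| ^ (-β)) with hf
  set As : ℕ → Set ℝ := fun j =>
    (fun y => |x - y|) ⁻¹' (Set.Ico ((2:ℝ) ^ (-(j:ℝ) - 1)) ((2:ℝ) ^ (-(j:ℝ)))) with hAs
  have habs : Measurable fun y : ℝ => |x - y| :=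
    ((continuous_const.sub continuous_id).abs).measurable
  have hAm : ∀ j, MeasurableSet (As j) := fun j => habs measurableSet_Ico
  have hcover : Set.Ioo (0:ℝ) 1 ⊆ {x} ∪ ⋃ j, As j := by
    intro y hy
    by_cases hxy : y = x
    · exact Or.inl hxy
    · refine Or.inr ?_
      have hd0 : 0 < |x - y| := by
        rw [abs_pos, sub_ne_zero]
        exact fun h => hxy h.symm
      have hd1 : |x - y| < 1 := by
        rw [abs_lt]
        constructor <;> [nlinarith [hx.1, hx.2, hy.1, hy.2]; nlinarith [hx.1, hx.2, hy.1, hy.2]]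
      obtain ⟨j, hj1, hj2⟩ := annuli_exists hd0 hd1
      exact Set.mem_iUnion.2 ⟨j, hj1, hj2⟩
  have hsub : ∀ j, As j ⊆ Metric.ball x ((2:ℝ) ^ (-(j:ℝ))) := by
    intro j y hy
    rw [Metric.mem_ball, Real.dist_eq, abs_sub_comm]
    exact hy.2
  calc ∫⁻ y in Set.Ioo (0:ℝ) 1, f y ∂μ
      ≤ ∫⁻ y in {x} ∪ ⋃ j, As j, f y ∂μ := lintegral_mono_set hcover
    _ ≤ (∫⁻ y in {x}, f y ∂μ) + ∫⁻ y in ⋃ j, As j, f y ∂μ := lintegral_union_le _ _ _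
    _ = ∫⁻ y in ⋃ j, As j, f y ∂μ := by
        rw [lintegral_singleton]
        have : f x = 0 := by
          simp [hf, Real.zero_rpow (by linarith : -β ≠ 0)]
        rw [this, zero_mul, zero_add]
    _ ≤ ∑' j, ∫⁻ y in As j, f y ∂μ := lintegral_iUnion_le _ _
    _ ≤ ∑' j : ℕ, ENNReal.ofReal (Cμ * 2 ^ β) * (ENNReal.ofReal ((2:ℝ) ^ (β - α))) ^ j := by
        refine ENNReal.tsum_le_tsum fun j => ?_
        have hconst : ∀ y ∈ As j, f y ≤ ENNReal.ofReal (((2:ℝ) ^ (-(j:ℝ) - 1)) ^ (-β)) := by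
          intro y hy
          exact ENNReal.ofReal_le_ofReal
            (Real.rpow_le_rpow_of_nonpos (Real.rpow_pos_of_pos (by norm_num) _) hy.1
              (by linarith))
        calc ∫⁻ y in As j, f y ∂μ
            ≤ ∫⁻ _ in As j, ENNReal.ofReal (((2:ℝ) ^ (-(j:ℝ) - 1)) ^ (-β)) ∂μ :=
              setLIntegral_mono' (hAm j) hconst
          _ = ENNReal.ofReal (((2:ℝ) ^ (-(j:ℝ) - 1)) ^ (-β)) * μ (As j) := setLIntegral_const _ _
          _ ≤ ENNReal.ofReal (((2:ℝ) ^ (-(j:ℝ) - 1)) ^ (-β)) *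
                ENNReal.ofReal (Cμ * ((2:ℝ) ^ (-(j:ℝ))) ^ α) := by
              refine mul_le_mul' le_rfl ?_
              exact (measure_mono (hsub j)).trans
                (hμ x _ (Real.rpow_pos_of_pos (by norm_num) _))
          _ = ENNReal.ofReal (Cμ * 2 ^ β) * (ENNReal.ofReal ((2:ℝ) ^ (β - α))) ^ j := by
              have hmul : ∀ a b : ℝ, (2:ℝ) ^ a * (2:ℝ) ^ b = 2 ^ (a + b) :=
                fun a b => (Real.rpow_add (by norm_num) a b).symm
              have hreal : ((2:ℝ) ^ (-(j:ℝ) - 1)) ^ (-β) * (Cμ * ((2:ℝ) ^ (-(j:ℝ))) ^ α) =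
                  (Cμ * 2 ^ β) * ((2:ℝ) ^ (β - α)) ^ j := by
                calc ((2:ℝ) ^ (-(j:ℝ) - 1)) ^ (-β) * (Cμ * ((2:ℝ) ^ (-(j:ℝ))) ^ α)
                    = Cμ * ((2:ℝ) ^ ((-(j:ℝ) - 1) * (-β)) * (2:ℝ) ^ ((-(j:ℝ)) * α)) := by
                      rw [← Real.rpow_mul (by norm_num : (0:ℝ) ≤ 2),
                        ← Real.rpow_mul (by norm_num : (0:ℝ) ≤ 2)]
                      ring
                  _ = Cμ * 2 ^ ((-(j:ℝ) - 1) * (-β) + (-(j:ℝ)) * α) := by rw [hmul]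
                  _ = Cμ * 2 ^ (β + (β - α) * (j:ℝ)) := by
                      rw [show (-(j:ℝ) - 1) * (-β) + (-(j:ℝ)) * α = β + (β - α) * (j:ℝ) by ring]
                  _ = Cμ * ((2:ℝ) ^ β * (2:ℝ) ^ ((β - α) * (j:ℝ))) := by rw [hmul]
                  _ = (Cμ * 2 ^ β) * ((2:ℝ) ^ (β - α)) ^ j := by
                      rw [← Real.rpow_natCast ((2:ℝ) ^ (β - α)) j,
                        ← Real.rpow_mul (by norm_num : (0:ℝ) ≤ 2)]
                      ring
              rw [← ENNReal.ofReal_pow (Real.rpow_nonneg (by norm_num) _),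
                ← ENNReal.ofReal_mul (show (0:ℝ) ≤ Cμ * 2 ^ β by positivity),
                ← ENNReal.ofReal_mul (Real.rpow_nonneg (Real.rpow_nonneg (by norm_num) _) _),
                hreal]
    _ = ENNReal.ofReal (Cμ * 2 ^ β) * (1 - ENNReal.ofReal ((2:ℝ) ^ (β - α)))⁻¹ := by
        rw [ENNReal.tsum_mul_left, ENNReal.tsum_geometric]


private lemma schur_step (ν : Measure ℝ) {q q' : ℝ} (hq : 2 ≤ q) (hq' : q' = q / (q - 1))
    {k H : ℝ → ℝ≥0∞} (hk : Measurable k) (hH : Measurable H) :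
    ∫⁻ y, k y * H y ∂ν ≤
      (∫⁻ y, k y ^ (q / 2) * H y ^ q' ∂ν) ^ (1 / q) * (∫⁻ y, k y ^ (q / 2) ∂ν) ^ (1 / q)
        * (∫⁻ y, H y ^ q' ∂ν) ^ (1 - 2 / q) := by
  have hq0 : (0:ℝ) < q := by linarith
  rcases eq_or_lt_of_le hq with hq2 | hq2
  · -- q = 2
    subst hq2
    have hq'2 : q' = 2 := by norm_num at hq'; exact hq'
    subst hq'2
    have hcon : Real.HolderConjugate 2 2 := (Real.holderConjugate_iff_eq_conjExponent one_lt_two).2 (by norm_num)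
    have h1 : ∀ y, k y * H y = (k y ^ ((1:ℝ)/2) * H y) * (k y ^ ((1:ℝ)/2)) := by
      intro y
      rw [mul_comm (k y ^ ((1:ℝ)/2)) (H y), mul_assoc, ← ENNReal.rpow_add_of_nonneg _ _
        (by norm_num) (by norm_num)]
      norm_num [mul_comm]
    calc ∫⁻ y, k y * H y ∂ν
        = ∫⁻ y, ((fun y => k y ^ ((1:ℝ)/2) * H y) * fun y => k y ^ ((1:ℝ)/2)) y ∂ν := by
          simp only [Pi.mul_apply]; exact lintegral_congr h1
      _ ≤ (∫⁻ y, (k y ^ ((1:ℝ)/2) * H y) ^ (2:ℝ) ∂ν) ^ (1/(2:ℝ)) *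
            (∫⁻ y, (k y ^ ((1:ℝ)/2)) ^ (2:ℝ) ∂ν) ^ (1/(2:ℝ)) :=
          ENNReal.lintegral_mul_le_Lp_mul_Lq ν hcon
            ((hk.pow measurable_const).mul hH).aemeasurable
            (hk.pow measurable_const).aemeasurable
      _ = (∫⁻ y, k y ^ ((2:ℝ)/2) * H y ^ (2:ℝ) ∂ν) ^ (1/(2:ℝ)) *
            (∫⁻ y, k y ^ ((2:ℝ)/2) ∂ν) ^ (1/(2:ℝ)) * (∫⁻ y, H y ^ (2:ℝ) ∂ν) ^ (1 - 2/(2:ℝ)) := by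
          rw [show (1:ℝ) - 2/2 = 0 by norm_num, ENNReal.rpow_zero, mul_one]
          congr 1
          · congr 1
            refine lintegral_congr fun y => ?_
            rw [ENNReal.mul_rpow_of_nonneg _ _ (by norm_num : (0:ℝ) ≤ 2),
              ← ENNReal.rpow_mul]
            norm_num
          · congr 1
            refine lintegral_congr fun y => ?_
            rw [← ENNReal.rpow_mul]
            norm_num
  · -- 2 < q
    have hq1 : (1:ℝ) < q := by linarith
    have hqne : q ≠ 0 := by linarith
    have hq1ne : q - 1 ≠ 0 := by linarith
    have hq2ne : q - 2 ≠ 0 := by linarith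
    have hq'pos : 0 < q' := by rw [hq']; exact div_pos hq0 (by linarith)
    have hq'le : q' ≤ q := by
      rw [hq', div_le_iff₀ (by linarith)]
      nlinarith
    have hq'q : q' / q ≤ 1 := by rw [div_le_one hq0]; exact hq'le
    have hu : Real.HolderConjugate (q/2) (q/(q-2)) := by
      rw [Real.holderConjugate_iff_eq_conjExponent (by linarith)]
      field_simp
    have h1 : ∀ y, k y * H y =
        (k y ^ ((1:ℝ)/2) * H y ^ (q'/q) * k y ^ ((1:ℝ)/2)) * (H y ^ (1 - q'/q)) := by
      intro y
      have e1 : k y ^ ((1:ℝ)/2) * H y ^ (q'/q) * k y ^ ((1:ℝ)/2) * H y ^ (1 - q'/q)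
          = (k y ^ ((1:ℝ)/2) * k y ^ ((1:ℝ)/2)) * (H y ^ (q'/q) * H y ^ (1 - q'/q)) := by ring
      rw [e1, ← ENNReal.rpow_add_of_nonneg _ _ (by norm_num) (by norm_num),
        ← ENNReal.rpow_add_of_nonneg _ _ (by positivity) (by linarith)]
      norm_num
    have hmeas1 : Measurable fun y => k y ^ ((1:ℝ)/2) * H y ^ (q'/q) :=
      (hk.pow measurable_const).mul (hH.pow measurable_const)
    have hmeas2 : Measurable fun y => k y ^ ((1:ℝ)/2) := hk.pow measurable_const
    have e2 : ∀ y, ((k y ^ ((1:ℝ)/2) * H y ^ (q'/q)) ^ (q/2)) ^ (2:ℝ)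
        = k y ^ (q/2) * H y ^ q' := by
      intro y
      rw [← ENNReal.rpow_mul, ENNReal.mul_rpow_of_nonneg _ _
          (by positivity : (0:ℝ) ≤ q/2*2),
        ← ENNReal.rpow_mul, ← ENNReal.rpow_mul,
        (by ring : (1:ℝ)/2 * (q/2*2) = q/2),
        (by field_simp : (q'/q) * (q/2*2) = q' * 2 / 2),
        (by ring : q' * 2 / 2 = q')]
    have e3 : ∀ y, ((k y ^ ((1:ℝ)/2)) ^ (q/2)) ^ (2:ℝ) = k y ^ (q/2) := by
      intro y
      rw [← ENNReal.rpow_mul, ← ENNReal.rpow_mul,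
        (by ring : (1:ℝ)/2 * (q/2*2) = q/2)]
    have h2 : (∫⁻ y, (k y ^ ((1:ℝ)/2) * H y ^ (q'/q) * k y ^ ((1:ℝ)/2)) ^ (q/2) ∂ν)
        ≤ (∫⁻ y, k y ^ (q/2) * H y ^ q' ∂ν) ^ (1/(2:ℝ)) *
          (∫⁻ y, k y ^ (q/2) ∂ν) ^ (1/(2:ℝ)) := by
      have hcon : Real.HolderConjugate 2 2 := (Real.holderConjugate_iff_eq_conjExponent one_lt_two).2 (by norm_num)
      calc ∫⁻ y, (k y ^ ((1:ℝ)/2) * H y ^ (q'/q) * k y ^ ((1:ℝ)/2)) ^ (q/2) ∂ν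
          = ∫⁻ y, ((fun y => (k y ^ ((1:ℝ)/2) * H y ^ (q'/q)) ^ (q/2)) *
              (fun y => (k y ^ ((1:ℝ)/2)) ^ (q/2))) y ∂ν := by
            simp only [Pi.mul_apply]
            exact lintegral_congr fun y =>
              ENNReal.mul_rpow_of_nonneg _ _ (by positivity)
        _ ≤ (∫⁻ y, ((k y ^ ((1:ℝ)/2) * H y ^ (q'/q)) ^ (q/2)) ^ (2:ℝ) ∂ν) ^ (1/(2:ℝ)) *
            (∫⁻ y, ((k y ^ ((1:ℝ)/2)) ^ (q/2)) ^ (2:ℝ) ∂ν) ^ (1/(2:ℝ)) :=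
            ENNReal.lintegral_mul_le_Lp_mul_Lq ν hcon
              (hmeas1.pow measurable_const).aemeasurable
              (hmeas2.pow measurable_const).aemeasurable
        _ = (∫⁻ y, k y ^ (q/2) * H y ^ q' ∂ν) ^ (1/(2:ℝ)) *
            (∫⁻ y, k y ^ (q/2) ∂ν) ^ (1/(2:ℝ)) := by
            rw [lintegral_congr e2, lintegral_congr e3]
    have h3 : ∀ y, (H y ^ (1 - q'/q)) ^ (q/(q-2)) = H y ^ q' := by
      intro y
      rw [← ENNReal.rpow_mul]
      congr 1
      rw [hq']
      field_simp
      ring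
    calc ∫⁻ y, k y * H y ∂ν
        = ∫⁻ y, ((fun y => k y ^ ((1:ℝ)/2) * H y ^ (q'/q) * k y ^ ((1:ℝ)/2)) *
            (fun y => H y ^ (1 - q'/q))) y ∂ν := by
          simp only [Pi.mul_apply]
          exact lintegral_congr h1
      _ ≤ (∫⁻ y, (k y ^ ((1:ℝ)/2) * H y ^ (q'/q) * k y ^ ((1:ℝ)/2)) ^ (q/2) ∂ν) ^ (1/(q/2)) *
            (∫⁻ y, (H y ^ (1 - q'/q)) ^ (q/(q-2)) ∂ν) ^ (1/(q/(q-2))) :=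
          ENNReal.lintegral_mul_le_Lp_mul_Lq ν hu
            (hmeas1.mul hmeas2).aemeasurable
            (hH.pow measurable_const).aemeasurable
      _ ≤ (((∫⁻ y, k y ^ (q/2) * H y ^ q' ∂ν) ^ (1/(2:ℝ)) *
            (∫⁻ y, k y ^ (q/2) ∂ν) ^ (1/(2:ℝ))) ^ ((1:ℝ)/(q/2))) *
            (∫⁻ y, H y ^ q' ∂ν) ^ (1 - 2/q) := by
          refine mul_le_mul' (ENNReal.rpow_le_rpow h2 (by positivity)) (le_of_eq ?_)
          rw [lintegral_congr h3, one_div_div,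
            (by rw [sub_div, div_self hqne] : (q-2)/q = 1 - 2/q)]
      _ = (∫⁻ y, k y ^ (q/2) * H y ^ q' ∂ν) ^ (1/q) * (∫⁻ y, k y ^ (q/2) ∂ν) ^ (1/q)
            * (∫⁻ y, H y ^ q' ∂ν) ^ (1 - 2/q) := by
          congr 1
          rw [ENNReal.mul_rpow_of_nonneg _ _ (by positivity : (0:ℝ) ≤ 1/(q/2)),
            ← ENNReal.rpow_mul, ← ENNReal.rpow_mul,
            (by field_simp : (1:ℝ)/2 * (1/(q/2)) = 1/q)]


/-- The mixed norm `N(g) = ‖g‖_{L^{q'}_x(dμ) L^1_t}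
  = (∫_{(0,1)} (∫_0^1 |g(x,t)| dt)^{q'} dμ(x))^{1/q'}`. -/
noncomputable def mixedNorm (μ : Measure ℝ) (q' : ℝ) (g : ℝ → ℝ → ℂ) : ℝ≥0∞ :=
  (∫⁻ x in Set.Ioo (0:ℝ) 1,
      (∫⁻ t in Set.Ioo (0:ℝ) 1, (‖g x t‖₊ : ℝ≥0∞)) ^ q' ∂μ) ^ (1 / q')

/-- Lemma 2.1, estimate (7): the Hardy–Littlewood–Sobolev-type bilinear estimate with kernel
`|x − x'|^{−ρ}` for an `α`-dimensional measure `μ` with constant `C_μ`, when `0 < qρ/2 < α`. -/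
theorem stmt8 (α q Cμ ρ : ℝ) (hα : 0 < α) (hα1 : α ≤ 1) (hq : 2 ≤ q) (hCμ : 0 < Cμ)
    (μ : Measure ℝ)
    (hμ : ∀ x : ℝ, ∀ r : ℝ, 0 < r → μ (Metric.ball x r) ≤ ENNReal.ofReal (Cμ * r ^ α))
    (hρ0 : 0 < q * ρ / 2) (hρα : q * ρ / 2 < α) :
    ∃ C > 0, ∀ g h : ℝ → ℝ → ℂ,
      Measurable (Function.uncurry g) → Measurable (Function.uncurry h) →
      ENNReal.ofReal (norm
        (∫ x in Set.Ioo (0:ℝ) 1, ∫ t in Set.Ioo (0:ℝ) 1, ∫ x' in Set.Ioo (0:ℝ) 1,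
          ∫ t' in Set.Ioo (0:ℝ) 1,
            g x t * h x' t' * ((|x - x'| ^ (-ρ) : ℝ) : ℂ)
          ∂volume ∂μ ∂volume ∂μ)) ≤
      ENNReal.ofReal C *
        mixedNorm μ (q / (q - 1)) g * mixedNorm μ (q / (q - 1)) h := by
  have hq0 : (0:ℝ) < q := by linarith
  have hq1 : (1:ℝ) < q := by linarith
  have hqne : q ≠ 0 := ne_of_gt hq0
  have hρ : 0 < ρ := by nlinarith
  set q' : ℝ := q / (q - 1) with hq'def
  have hq'pos : 0 < q' := div_pos hq0 (by linarith)
  have hq'1 : 1 < q' := by rw [hq'def, lt_div_iff₀ (by linarith)]; linarith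
  set β : ℝ := q * ρ / 2 with hβdef
  have hβpos : 0 < β := hρ0
  have hβα : β < α := hρα
  set ν := μ.restrict (Set.Ioo (0:ℝ) 1) with hν
  haveI hνfin : IsFiniteMeasure ν := by
    constructor
    rw [hν, Measure.restrict_apply_univ]
    refine lt_of_le_of_lt ((measure_mono ?_).trans (hμ (1/2) 1 one_pos))
      ENNReal.ofReal_lt_top
    intro y hy
    rw [Metric.mem_ball, Real.dist_eq, abs_lt]
    constructor <;> [linarith [hy.1, hy.2]; linarith [hy.1, hy.2]]
  set A := ENNReal.ofReal (Cμ * 2 ^ β) * (1 - ENNReal.ofReal ((2:ℝ) ^ (β - α)))⁻¹ with hA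
  have hAne : A ≠ ⊤ := by
    refine ENNReal.mul_ne_top ENNReal.ofReal_ne_top ?_
    rw [Ne, ENNReal.inv_eq_top, tsub_eq_zero_iff_le]
    exact not_le.2 (ENNReal.ofReal_lt_one.2
      (Real.rpow_lt_one_of_one_lt_of_neg one_lt_two (by linarith)))
  have hA2 : A ^ (2/q : ℝ) ≠ ⊤ := ENNReal.rpow_ne_top_of_nonneg (by positivity) hAne
  refine ⟨(A ^ (2/q : ℝ)).toReal + 1, by positivity, ?_⟩
  intro g h mg mh
  set K : ℝ → ℝ → ℝ≥0∞ := fun x y => ENNReal.ofReal (|x - y| ^ (-ρ)) with hK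
  have hKm : Measurable (Function.uncurry K) := by
    rw [hK]
    exact (((continuous_fst.sub continuous_snd).abs.measurable).pow
      measurable_const).ennreal_ofReal
  have hKne : ∀ x y, K x y ≠ ⊤ := fun x y => by rw [hK]; exact ENNReal.ofReal_ne_top
  set Gf : ℝ → ℝ≥0∞ := fun x => ∫⁻ t in Set.Ioo (0:ℝ) 1, (‖g x t‖₊ : ℝ≥0∞) with hGf
  set Hf : ℝ → ℝ≥0∞ := fun x => ∫⁻ t in Set.Ioo (0:ℝ) 1, (‖h x t‖₊ : ℝ≥0∞) with hHf
  have hGfm : Measurable Gf := by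
    rw [hGf]
    exact Measurable.lintegral_prod_right' (mg.nnnorm.coe_nnreal_ennreal)
  have hHfm : Measurable Hf := by
    rw [hHf]
    exact Measurable.lintegral_prod_right' (mh.nnnorm.coe_nnreal_ennreal)
  set T : ℝ → ℝ≥0∞ := fun x => ∫⁻ y, K x y * Hf y ∂ν with hT
  have hTm : Measurable T := by
    rw [hT]
    exact Measurable.lintegral_prod_right' (hKm.mul (hHfm.comp measurable_snd))
  set IH := ∫⁻ y, Hf y ^ q' ∂ν with hIH
  set IG := ∫⁻ x, Gf x ^ q' ∂ν with hIG
  set Φ : ℝ → ℝ≥0∞ := fun x => ∫⁻ y, K x y ^ (q/2) * Hf y ^ q' ∂ν with hΦ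
  have hΦm : Measurable Φ := by
    rw [hΦ]
    exact Measurable.lintegral_prod_right'
      ((hKm.pow measurable_const).mul ((hHfm.pow measurable_const).comp measurable_snd))
  -- kernel power identity
  have hKpow : ∀ x y : ℝ, K x y ^ (q/2 : ℝ) = ENNReal.ofReal (|x - y| ^ (-β)) := by
    intro x y
    rw [hK]
    simp only []
    rw [ENNReal.ofReal_rpow_of_nonneg (Real.rpow_nonneg (abs_nonneg _) _) (by positivity),
      ← Real.rpow_mul (abs_nonneg _)]
    congr 2
    rw [hβdef]; ring
  have hkerx : ∀ x ∈ Set.Ioo (0:ℝ) 1, ∫⁻ y, K x y ^ (q/2 : ℝ) ∂ν ≤ A := by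
    intro x hx
    calc ∫⁻ y, K x y ^ (q/2 : ℝ) ∂ν
        = ∫⁻ y in Set.Ioo (0:ℝ) 1, ENNReal.ofReal (|x - y| ^ (-β)) ∂μ := by
          rw [hν]; exact lintegral_congr fun y => hKpow x y
      _ ≤ A := kernel_bound hCμ μ hμ hβpos hβα hx
  have hkery : ∀ y ∈ Set.Ioo (0:ℝ) 1, ∫⁻ x, K x y ^ (q/2 : ℝ) ∂ν ≤ A := by
    intro y hy
    calc ∫⁻ x, K x y ^ (q/2 : ℝ) ∂ν
        = ∫⁻ x in Set.Ioo (0:ℝ) 1, ENNReal.ofReal (|y - x| ^ (-β)) ∂μ := by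
          rw [hν]
          refine lintegral_congr fun x => ?_
          rw [hKpow x y, abs_sub_comm]
      _ ≤ A := kernel_bound hCμ μ hμ hβpos hβα hy
  -- Step 0 : bound the iterated Bochner integral by an iterated lower integral
  have step0 : ENNReal.ofReal (norm
      (∫ x in Set.Ioo (0:ℝ) 1, ∫ t in Set.Ioo (0:ℝ) 1, ∫ x' in Set.Ioo (0:ℝ) 1,
          ∫ t' in Set.Ioo (0:ℝ) 1,
            g x t * h x' t' * ((|x - x'| ^ (-ρ) : ℝ) : ℂ) ∂volume ∂μ ∂volume ∂μ)) ≤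
      ∫⁻ x in Set.Ioo (0:ℝ) 1, ∫⁻ t in Set.Ioo (0:ℝ) 1, ∫⁻ y in Set.Ioo (0:ℝ) 1,
        ∫⁻ t' in Set.Ioo (0:ℝ) 1,
          (‖g x t‖₊ : ℝ≥0∞) * (‖h y t'‖₊ : ℝ≥0∞) * K x y ∂volume ∂μ ∂volume ∂μ := by
    rw [ofReal_norm_eq_enorm]
    refine le_trans (enorm_integral_le_lintegral_enorm _) (lintegral_mono fun x => ?_)
    refine le_trans (enorm_integral_le_lintegral_enorm _) (lintegral_mono fun t => ?_)
    refine le_trans (enorm_integral_le_lintegral_enorm _) (lintegral_mono fun y => ?_)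
    refine le_trans (enorm_integral_le_lintegral_enorm _) (lintegral_mono fun t' => ?_)
    refine le_of_eq ?_
    simp only [enorm_mul]
    congr 1
    rw [← ofReal_norm_eq_enorm, Complex.norm_real, Real.norm_eq_abs,
      abs_of_nonneg (Real.rpow_nonneg (abs_nonneg _) _), hK]
  -- Step 1 : rearrange
  have step1 : (∫⁻ x in Set.Ioo (0:ℝ) 1, ∫⁻ t in Set.Ioo (0:ℝ) 1,
        ∫⁻ y in Set.Ioo (0:ℝ) 1, ∫⁻ t' in Set.Ioo (0:ℝ) 1,
          (‖g x t‖₊ : ℝ≥0∞) * (‖h y t'‖₊ : ℝ≥0∞) * K x y ∂volume ∂μ ∂volume ∂μ)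
      = ∫⁻ x, Gf x * T x ∂ν := by
    refine lintegral_congr fun x => ?_
    have innerT : ∀ t : ℝ, (∫⁻ y in Set.Ioo (0:ℝ) 1, ∫⁻ t' in Set.Ioo (0:ℝ) 1,
        (‖g x t‖₊ : ℝ≥0∞) * (‖h y t'‖₊ : ℝ≥0∞) * K x y ∂volume ∂μ)
        = (‖g x t‖₊ : ℝ≥0∞) * T x := by
      intro t
      calc (∫⁻ y in Set.Ioo (0:ℝ) 1, ∫⁻ t' in Set.Ioo (0:ℝ) 1,
              (‖g x t‖₊ : ℝ≥0∞) * (‖h y t'‖₊ : ℝ≥0∞) * K x y ∂volume ∂μ)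
          = ∫⁻ y in Set.Ioo (0:ℝ) 1, (‖g x t‖₊ : ℝ≥0∞) * (K x y * Hf y) ∂μ := by
            refine lintegral_congr fun y => ?_
            calc (∫⁻ t' in Set.Ioo (0:ℝ) 1,
                    (‖g x t‖₊ : ℝ≥0∞) * (‖h y t'‖₊ : ℝ≥0∞) * K x y ∂volume)
                = ∫⁻ t' in Set.Ioo (0:ℝ) 1,
                    ((‖g x t‖₊ : ℝ≥0∞) * K x y) * (‖h y t'‖₊ : ℝ≥0∞) ∂volume :=
                  lintegral_congr fun t' => by ring
              _ = ((‖g x t‖₊ : ℝ≥0∞) * K x y) * Hf y :=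
                  lintegral_const_mul' _ _
                    (ENNReal.mul_ne_top ENNReal.coe_ne_top (hKne x y))
              _ = (‖g x t‖₊ : ℝ≥0∞) * (K x y * Hf y) := by ring
        _ = (‖g x t‖₊ : ℝ≥0∞) * ∫⁻ y in Set.Ioo (0:ℝ) 1, K x y * Hf y ∂μ :=
            lintegral_const_mul' _ _ ENNReal.coe_ne_top
        _ = (‖g x t‖₊ : ℝ≥0∞) * T x := rfl
    calc (∫⁻ t in Set.Ioo (0:ℝ) 1, ∫⁻ y in Set.Ioo (0:ℝ) 1, ∫⁻ t' in Set.Ioo (0:ℝ) 1,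
          (‖g x t‖₊ : ℝ≥0∞) * (‖h y t'‖₊ : ℝ≥0∞) * K x y ∂volume ∂μ ∂volume)
        = ∫⁻ t in Set.Ioo (0:ℝ) 1, (‖g x t‖₊ : ℝ≥0∞) * T x ∂volume :=
          lintegral_congr fun t => innerT t
      _ = Gf x * T x := lintegral_mul_const _ (mg.of_uncurry_left.nnnorm.coe_nnreal_ennreal)
  -- Step 2 : Hölder
  have hcon : Real.HolderConjugate q' q :=
    ((Real.holderConjugate_iff_eq_conjExponent hq1).2 hq'def).symm
  have step2 : ∫⁻ x, Gf x * T x ∂ν ≤ IG ^ (1/q' : ℝ) * (∫⁻ x, T x ^ (q:ℝ) ∂ν) ^ (1/q : ℝ) := by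
    rw [hIG]
    simpa using ENNReal.lintegral_mul_le_Lp_mul_Lq ν hcon hGfm.aemeasurable hTm.aemeasurable
  -- Step 3 : pointwise Schur bound
  have step3 : ∀ x ∈ Set.Ioo (0:ℝ) 1, T x ^ (q:ℝ) ≤ Φ x * (A * IH ^ (q - 2 : ℝ)) := by
    intro x hx
    have hs := schur_step ν hq hq'def (k := fun y => K x y) (H := Hf)
      hKm.of_uncurry_left hHfm
    have h1 : T x ≤ Φ x ^ (1/q : ℝ) * A ^ (1/q : ℝ) * IH ^ (1 - 2/q : ℝ) := by
      refine hs.trans ?_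
      exact mul_le_mul' (mul_le_mul' le_rfl
        (ENNReal.rpow_le_rpow (hkerx x hx) (by positivity))) le_rfl
    calc T x ^ (q:ℝ) ≤ (Φ x ^ (1/q : ℝ) * A ^ (1/q : ℝ) * IH ^ (1 - 2/q : ℝ)) ^ (q:ℝ) :=
          ENNReal.rpow_le_rpow h1 hq0.le
      _ = Φ x * (A * IH ^ (q - 2 : ℝ)) := by
          rw [ENNReal.mul_rpow_of_nonneg _ _ hq0.le, ENNReal.mul_rpow_of_nonneg _ _ hq0.le,
            ← ENNReal.rpow_mul, ← ENNReal.rpow_mul, ← ENNReal.rpow_mul,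
            one_div_mul_cancel hqne,
            (by rw [sub_mul, one_mul, div_mul_cancel₀ _ hqne] : (1 - 2/q) * q = q - 2),
            ENNReal.rpow_one, ENNReal.rpow_one, mul_assoc]
  -- Step 4 : integrate, swap, and use the kernel bound again
  have hΦle : ∫⁻ x, Φ x ∂ν ≤ A * IH := by
    have hswap : ∫⁻ x, Φ x ∂ν = ∫⁻ y, ∫⁻ x, K x y ^ (q/2 : ℝ) * Hf y ^ q' ∂ν ∂ν := by
      simp only [hΦ]
      exact lintegral_lintegral_swap
        (((hKm.pow measurable_const).mul
          ((hHfm.pow measurable_const).comp measurable_snd)).aemeasurable)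
    rw [hswap]
    calc (∫⁻ y, ∫⁻ x, K x y ^ (q/2 : ℝ) * Hf y ^ q' ∂ν ∂ν)
        = ∫⁻ y, (∫⁻ x, K x y ^ (q/2 : ℝ) ∂ν) * Hf y ^ q' ∂ν :=
          lintegral_congr fun y =>
            lintegral_mul_const _ (hKm.of_uncurry_right.pow measurable_const)
      _ ≤ ∫⁻ y in Set.Ioo (0:ℝ) 1, A * Hf y ^ q' ∂μ :=
          setLIntegral_mono' measurableSet_Ioo fun y hy =>
            mul_le_mul' (hkery y hy) le_rfl
      _ = A * IH := lintegral_const_mul' _ _ hAne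
  have step4 : ∫⁻ x, T x ^ (q:ℝ) ∂ν ≤ A ^ (2:ℝ) * IH ^ (q - 1 : ℝ) := by
    calc ∫⁻ x, T x ^ (q:ℝ) ∂ν
        ≤ ∫⁻ x in Set.Ioo (0:ℝ) 1, Φ x * (A * IH ^ (q - 2 : ℝ)) ∂μ :=
          setLIntegral_mono' measurableSet_Ioo step3
      _ = (∫⁻ x, Φ x ∂ν) * (A * IH ^ (q - 2 : ℝ)) := lintegral_mul_const _ hΦm
      _ ≤ (A * IH) * (A * IH ^ (q - 2 : ℝ)) := mul_le_mul' hΦle le_rfl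
      _ = A ^ (2:ℝ) * IH ^ (q - 1 : ℝ) := by
          rw [show A ^ (2:ℝ) = A * A by
              rw [(by norm_num : (2:ℝ) = 1 + 1),
                ENNReal.rpow_add_of_nonneg _ _ zero_le_one zero_le_one, ENNReal.rpow_one],
            show IH ^ (q - 1 : ℝ) = IH * IH ^ (q - 2 : ℝ) by
              rw [(by ring : q - 1 = 1 + (q - 2)),
                ENNReal.rpow_add_of_nonneg _ _ zero_le_one (by linarith), ENNReal.rpow_one]]
          ring
  -- final assembly
  have hNg : mixedNorm μ q' g = IG ^ (1/q' : ℝ) := rfl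
  have hNh : mixedNorm μ q' h = IH ^ (1/q' : ℝ) := rfl
  have hAC : A ^ (2/q : ℝ) ≤ ENNReal.ofReal ((A ^ (2/q : ℝ)).toReal + 1) := by
    conv_lhs => rw [← ENNReal.ofReal_toReal hA2]
    exact ENNReal.ofReal_le_ofReal (by linarith)
  calc ENNReal.ofReal (norm
      (∫ x in Set.Ioo (0:ℝ) 1, ∫ t in Set.Ioo (0:ℝ) 1, ∫ x' in Set.Ioo (0:ℝ) 1,
          ∫ t' in Set.Ioo (0:ℝ) 1,
            g x t * h x' t' * ((|x - x'| ^ (-ρ) : ℝ) : ℂ) ∂volume ∂μ ∂volume ∂μ))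
      ≤ ∫⁻ x in Set.Ioo (0:ℝ) 1, ∫⁻ t in Set.Ioo (0:ℝ) 1, ∫⁻ y in Set.Ioo (0:ℝ) 1,
          ∫⁻ t' in Set.Ioo (0:ℝ) 1,
            (‖g x t‖₊ : ℝ≥0∞) * (‖h y t'‖₊ : ℝ≥0∞) * K x y ∂volume ∂μ ∂volume ∂μ := step0
    _ = ∫⁻ x, Gf x * T x ∂ν := step1
    _ ≤ IG ^ (1/q' : ℝ) * (∫⁻ x, T x ^ (q:ℝ) ∂ν) ^ (1/q : ℝ) := step2
    _ ≤ IG ^ (1/q' : ℝ) * (A ^ (2:ℝ) * IH ^ (q - 1 : ℝ)) ^ (1/q : ℝ) :=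
        mul_le_mul' le_rfl (ENNReal.rpow_le_rpow step4 (by positivity))
    _ = A ^ (2/q : ℝ) * (IG ^ (1/q' : ℝ) * IH ^ (1/q' : ℝ)) := by
        rw [ENNReal.mul_rpow_of_nonneg _ _ (by positivity : (0:ℝ) ≤ 1/q),
          ← ENNReal.rpow_mul, ← ENNReal.rpow_mul,
          (by ring : (2:ℝ) * (1/q) = 2/q),
          (by rw [hq'def, one_div_div]; ring : (q - 1) * (1/q : ℝ) = 1/q')]
        ring
    _ ≤ ENNReal.ofReal ((A ^ (2/q : ℝ)).toReal + 1) * (IG ^ (1/q' : ℝ) * IH ^ (1/q' : ℝ)) :=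
        mul_le_mul' hAC le_rfl
    _ = ENNReal.ofReal ((A ^ (2/q : ℝ)).toReal + 1) * mixedNorm μ q' g *
          mixedNorm μ q' h := by rw [hNg, hNh, mul_assoc]
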